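/- There exist universal constants C₁, C₂ > 0 such that if n²p ≥ C₁ μ n log n, then with probability at least 1 − n^{−10} (over the sampling), for all l ∈ {1,…,n} the spectral norm satisfies ‖(1/p)·P_Ω(M*) − P_Ω^{(l)}(M*)‖ ≤ C₂ λ* √(μ/(np)). -/

import Mathlib

open MeasureTheory ProbabilityTheory
open scoped ENNReal

noncomputable section

/-- Euclidean (ℓ²) norm of a vector. -/
def l2 {n : ℕ} (x : Fin n → ℝ) : ℝ := Real.sqrt (∑ i, x i ^ 2)

/-- Sup (ℓ∞) norm of a vector. -/
def linf {n : ℕ} (x : Fin n → ℝ) : ℝ := ⨆ i, |x i|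

/-- Spectral norm of a matrix. -/
def specNorm {n : ℕ} (A : Matrix (Fin n) (Fin n) ℝ) : ℝ :=
  sSup {c : ℝ | ∃ x : Fin n → ℝ, l2 x ≤ 1 ∧ c = l2 (A.mulVec x)}

/-- Maximum absolute value of the entries of a matrix. -/
def matLinf {n : ℕ} (A : Matrix (Fin n) (Fin n) ℝ) : ℝ :=
  ⨆ q : Fin n × Fin n, |A q.1 q.2|

lemma esymm_step {n : ℕ} (r : ℕ) (v : Fin n → ℝ) :
    ((r : ℝ) + 1) * ∑ T ∈ Finset.powersetCard (r+1) (Finset.univ : Finset (Fin n)), ∏ j ∈ T, v j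
      = ∑ T ∈ Finset.powersetCard r (Finset.univ : Finset (Fin n)),
          (((∑ j, v j) - ∑ j ∈ T, v j) * ∏ j ∈ T, v j) := by
  have lhs : ((r : ℝ) + 1) * ∑ T ∈ Finset.powersetCard (r+1) (Finset.univ : Finset (Fin n)), ∏ j ∈ T, v j
      = ∑ T ∈ Finset.powersetCard (r+1) (Finset.univ : Finset (Fin n)), ∑ j ∈ T, ∏ k ∈ T, v k := by
    rw [Finset.mul_sum]
    refine Finset.sum_congr rfl fun T hT => ?_
    rw [Finset.mem_powersetCard_univ] at hT
    rw [Finset.sum_const, hT, nsmul_eq_mul]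
    push_cast
    ring
  have rhs : ∑ T ∈ Finset.powersetCard r (Finset.univ : Finset (Fin n)),
          (((∑ j, v j) - ∑ j ∈ T, v j) * ∏ j ∈ T, v j)
      = ∑ T ∈ Finset.powersetCard r (Finset.univ : Finset (Fin n)),
          ∑ j ∈ Finset.univ \ T, ∏ k ∈ insert j T, v k := by
    refine Finset.sum_congr rfl fun T hT => ?_
    have hins : ∀ j ∈ Finset.univ \ T, ∏ k ∈ insert j T, v k = v j * ∏ k ∈ T, v k :=
      fun j hj => Finset.prod_insert (Finset.mem_sdiff.mp hj).2
    rw [Finset.sum_congr rfl hins, ← Finset.sum_mul,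
      Finset.sum_sdiff_eq_sub (Finset.subset_univ T)]
  rw [lhs, rhs, Finset.sum_sigma', Finset.sum_sigma']
  refine Finset.sum_nbij' (fun a => ⟨a.1.erase a.2, a.2⟩) (fun a => ⟨insert a.2 a.1, a.2⟩)
    ?_ ?_ ?_ ?_ ?_
  · rintro ⟨T, j⟩ h
    simp only [Finset.mem_sigma, Finset.mem_powersetCard_univ] at h ⊢
    refine ⟨?_, ?_⟩
    · rw [Finset.card_erase_of_mem h.2, h.1]; simp
    · simp [Finset.mem_sdiff, Finset.notMem_erase]
  · rintro ⟨T, j⟩ h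
    simp only [Finset.mem_sigma, Finset.mem_powersetCard_univ, Finset.mem_sdiff] at h ⊢
    refine ⟨?_, Finset.mem_insert_self _ _⟩
    rw [Finset.card_insert_of_notMem h.2.2, h.1]
  · rintro ⟨T, j⟩ h
    simp only [Finset.mem_sigma, Finset.mem_powersetCard_univ] at h
    simp [Finset.insert_erase h.2]
  · rintro ⟨T, j⟩ h
    simp only [Finset.mem_sigma, Finset.mem_powersetCard_univ, Finset.mem_sdiff] at h
    simp [Finset.erase_insert h.2.2]
  · rintro ⟨T, j⟩ h
    simp only [Finset.mem_sigma, Finset.mem_powersetCard_univ] at h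
    simp [Finset.insert_erase h.2]

lemma esymm_upper {n : ℕ} (r : ℕ) (v : Fin n → ℝ) (hv : ∀ j, 0 ≤ v j) :
    (r.factorial : ℝ) * ∑ T ∈ Finset.powersetCard r (Finset.univ : Finset (Fin n)), ∏ j ∈ T, v j
      ≤ (∑ j, v j) ^ r := by
  induction r with
  | zero => simp
  | succ r ih =>
    have hs : 0 ≤ ∑ j, v j := Finset.sum_nonneg fun j _ => hv j
    have key := esymm_step r v
    have h1 : ∑ T ∈ Finset.powersetCard r (Finset.univ : Finset (Fin n)),
          (((∑ j, v j) - ∑ j ∈ T, v j) * ∏ j ∈ T, v j)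
        ≤ (∑ j, v j) * ∑ T ∈ Finset.powersetCard r (Finset.univ : Finset (Fin n)), ∏ j ∈ T, v j := by
      rw [Finset.mul_sum]
      refine Finset.sum_le_sum fun T _ => ?_
      have hT : 0 ≤ ∑ j ∈ T, v j := Finset.sum_nonneg fun j _ => hv j
      have hp : 0 ≤ ∏ j ∈ T, v j := Finset.prod_nonneg fun j _ => hv j
      nlinarith
    have hfac : (Nat.factorial (r+1) : ℝ) = (r.factorial : ℝ) * ((r : ℝ) + 1) := by
      rw [Nat.factorial_succ]; push_cast; ring
    calc (Nat.factorial (r+1) : ℝ) * ∑ T ∈ Finset.powersetCard (r+1) (Finset.univ : Finset (Fin n)), ∏ j ∈ T, v j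
        = (r.factorial : ℝ) * (((r:ℝ)+1) * ∑ T ∈ Finset.powersetCard (r+1) (Finset.univ : Finset (Fin n)), ∏ j ∈ T, v j) := by
          rw [hfac]; ring
      _ = (r.factorial : ℝ) * ∑ T ∈ Finset.powersetCard r (Finset.univ : Finset (Fin n)),
            (((∑ j, v j) - ∑ j ∈ T, v j) * ∏ j ∈ T, v j) := by rw [key]
      _ ≤ (r.factorial : ℝ) * ((∑ j, v j) * ∑ T ∈ Finset.powersetCard r (Finset.univ : Finset (Fin n)), ∏ j ∈ T, v j) := by
          exact mul_le_mul_of_nonneg_left h1 (by positivity)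
      _ = (∑ j, v j) * ((r.factorial : ℝ) * ∑ T ∈ Finset.powersetCard r (Finset.univ : Finset (Fin n)), ∏ j ∈ T, v j) := by ring
      _ ≤ (∑ j, v j) * (∑ j, v j) ^ r := mul_le_mul_of_nonneg_left ih hs
      _ = (∑ j, v j) ^ (r+1) := by ring

lemma esymm_lower {n : ℕ} (r : ℕ) (v : Fin n → ℝ) (b : ℝ) (hb : 0 ≤ b)
    (hv : ∀ j, 0 ≤ v j) (hvb : ∀ j, v j ≤ b) (h : (r : ℝ) * b ≤ ∑ j, v j) :
    ((∑ j, v j) - (r : ℝ) * b) ^ r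
      ≤ (r.factorial : ℝ) * ∑ T ∈ Finset.powersetCard r (Finset.univ : Finset (Fin n)), ∏ j ∈ T, v j := by
  induction r with
  | zero => simp
  | succ r ih =>
    have hrb : (r : ℝ) * b ≤ ∑ j, v j := by
      refine le_trans ?_ h
      have : (r : ℝ) ≤ (r : ℝ) + 1 := by linarith
      push_cast
      nlinarith
    have ih' := ih hrb
    have key := esymm_step r v
    have h1 : ((∑ j, v j) - (r : ℝ) * b) * ∑ T ∈ Finset.powersetCard r (Finset.univ : Finset (Fin n)), ∏ j ∈ T, v j
        ≤ ∑ T ∈ Finset.powersetCard r (Finset.univ : Finset (Fin n)),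
          (((∑ j, v j) - ∑ j ∈ T, v j) * ∏ j ∈ T, v j) := by
      rw [Finset.mul_sum]
      refine Finset.sum_le_sum fun T hT => ?_
      rw [Finset.mem_powersetCard_univ] at hT
      have hTs : ∑ j ∈ T, v j ≤ (r : ℝ) * b := by
        calc ∑ j ∈ T, v j ≤ ∑ _j ∈ T, b := Finset.sum_le_sum fun j _ => hvb j
          _ = (r : ℝ) * b := by rw [Finset.sum_const, hT, nsmul_eq_mul]
      have hp : 0 ≤ ∏ j ∈ T, v j := Finset.prod_nonneg fun j _ => hv j
      nlinarith
    have hfac : (Nat.factorial (r+1) : ℝ) = (r.factorial : ℝ) * ((r : ℝ) + 1) := by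
      rw [Nat.factorial_succ]; push_cast; ring
    have h0 : (0:ℝ) ≤ (∑ j, v j) - (r:ℝ) * b := by linarith
    have hnn : 0 ≤ (∑ j, v j) - ((r:ℝ)+1) * b := by push_cast at h; linarith
    push_cast
    calc ((∑ j, v j) - ((r:ℝ)+1) * b) ^ (r+1)
        ≤ ((∑ j, v j) - (r:ℝ) * b) ^ (r+1) := by
          refine pow_le_pow_left₀ hnn ?_ (r+1)
          linarith
      _ = ((∑ j, v j) - (r:ℝ) * b) * ((∑ j, v j) - (r:ℝ) * b) ^ r := by ring
      _ ≤ ((∑ j, v j) - (r:ℝ) * b) * ((r.factorial : ℝ) * ∑ T ∈ Finset.powersetCard r (Finset.univ : Finset (Fin n)), ∏ j ∈ T, v j) :=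
          mul_le_mul_of_nonneg_left ih' h0
      _ = (r.factorial : ℝ) * (((∑ j, v j) - (r:ℝ) * b) * ∑ T ∈ Finset.powersetCard r (Finset.univ : Finset (Fin n)), ∏ j ∈ T, v j) := by ring
      _ ≤ (r.factorial : ℝ) * ∑ T ∈ Finset.powersetCard r (Finset.univ : Finset (Fin n)),
            (((∑ j, v j) - ∑ j ∈ T, v j) * ∏ j ∈ T, v j) := mul_le_mul_of_nonneg_left h1 (by positivity)
      _ = (r.factorial : ℝ) * (((r:ℝ)+1) * ∑ T ∈ Finset.powersetCard (r+1) (Finset.univ : Finset (Fin n)), ∏ j ∈ T, v j) := by rw [key]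
      _ = (Nat.factorial (r+1) : ℝ) * ∑ T ∈ Finset.powersetCard (r+1) (Finset.univ : Finset (Fin n)), ∏ j ∈ T, v j := by
          rw [hfac]; ring

lemma l2_mulVec_le {n : ℕ} (A : Matrix (Fin n) (Fin n) ℝ) (x : Fin n → ℝ) (hx : l2 x ≤ 1) :
    l2 (A.mulVec x) ≤ Real.sqrt (∑ i, ∑ j, A i j ^ 2) := by
  have hx2 : ∑ j, x j ^ 2 ≤ 1 := by
    have h0 : (0:ℝ) ≤ ∑ j, x j ^ 2 := Finset.sum_nonneg fun j _ => sq_nonneg _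
    have hx' : Real.sqrt (∑ j, x j ^ 2) ≤ 1 := hx
    nlinarith [Real.sq_sqrt h0, Real.sqrt_nonneg (∑ j, x j ^ 2)]
  refine Real.sqrt_le_sqrt ?_
  refine Finset.sum_le_sum fun i _ => ?_
  have hmv : A.mulVec x i = ∑ j, A i j * x j := rfl
  rw [hmv]
  calc (∑ j, A i j * x j) ^ 2 ≤ (∑ j, A i j ^ 2) * ∑ j, x j ^ 2 :=
        Finset.sum_mul_sq_le_sq_mul_sq _ _ _
    _ ≤ (∑ j, A i j ^ 2) * 1 := by
        refine mul_le_mul_of_nonneg_left hx2 ?_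
        exact Finset.sum_nonneg fun j _ => sq_nonneg _
    _ = ∑ j, A i j ^ 2 := mul_one _

lemma specNorm_le {n : ℕ} (A : Matrix (Fin n) (Fin n) ℝ) (B : ℝ) (hB : 0 ≤ B)
    (h : ∑ i, ∑ j, A i j ^ 2 ≤ B ^ 2) : specNorm A ≤ B := by
  refine Real.sSup_le ?_ hB
  rintro c ⟨x, hx, rfl⟩
  calc l2 (A.mulVec x) ≤ Real.sqrt (∑ i, ∑ j, A i j ^ 2) := l2_mulVec_le A x hx
    _ ≤ Real.sqrt (B ^ 2) := Real.sqrt_le_sqrt h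
    _ = B := Real.sqrt_sq hB

/-- Deterministic bound: the leave-one-out difference matrix on the good event. -/
lemma det_bound {n : ℕ} (p lam mu : ℝ) (hp : 0 < p) (hp1 : p ≤ 1) (hlam : 0 < lam)
    (hn : 0 < n) (hmu : 0 < mu)
    (u : Fin n → ℝ) (hsum : ∑ j, u j ^ 2 = 1) (hmax : ∀ j, u j ^ 2 ≤ mu / n)
    (e : Fin n → Fin n → ℝ) (he01 : ∀ i j, e i j = 0 ∨ e i j = 1)
    (hesym : ∀ i j, e j i = e i j) (l : Fin n)
    (hS : ∑ j, u j ^ 2 * e l j ≤ 4 * p) :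
    specNorm (Matrix.of fun i j =>
        (1 / p) * e i j * (lam * u i * u j)
          - (if i = l ∨ j = l then lam * u i * u j
              else (1 / p) * e i j * (lam * u i * u j)))
      ≤ 4 * lam * Real.sqrt (mu / (n * p)) := by
  have hnp : (0:ℝ) < (n:ℝ) * p := by positivity
  have hq : (0:ℝ) ≤ mu / ((n:ℝ) * p) := by positivity
  refine specNorm_le _ _ (by positivity) ?_
  -- pointwise entry identification
  have hent : ∀ i j, (Matrix.of fun i j =>
        (1 / p) * e i j * (lam * u i * u j)
          - (if i = l ∨ j = l then lam * u i * u j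
              else (1 / p) * e i j * (lam * u i * u j))) i j
      = if i = l ∨ j = l then ((1/p) * e i j - 1) * (lam * u i * u j) else 0 := by
    intro i j
    simp only [Matrix.of_apply]
    split <;> ring
  -- termwise square bound
  have hterm : ∀ i j, ((Matrix.of fun i j =>
        (1 / p) * e i j * (lam * u i * u j)
          - (if i = l ∨ j = l then lam * u i * u j
              else (1 / p) * e i j * (lam * u i * u j))) i j) ^ 2
      ≤ (if i = l then ((1/p) * e i j - 1) ^ 2 * (lam * u i * u j) ^ 2 else 0)
        + (if j = l then ((1/p) * e i j - 1) ^ 2 * (lam * u i * u j) ^ 2 else 0) := by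
    intro i j
    rw [hent i j]
    have base : ((1/p * e i j - 1) * (lam * u i * u j))^2
        = (1/p * e i j - 1)^2 * (lam * u i * u j)^2 := mul_pow _ _ _
    have nn : 0 ≤ (1/p * e i j - 1)^2 * (lam * u i * u j)^2 := by positivity
    by_cases hij : i = l ∨ j = l
    · rw [if_pos hij]
      by_cases hi : i = l <;> by_cases hj : j = l
      · rw [if_pos hi, if_pos hj]; linarith
      · rw [if_pos hi, if_neg hj]; linarith
      · rw [if_neg hi, if_pos hj]; linarith
      · exact absurd hij (by tauto)
    · rw [if_neg hij, if_neg (fun h => hij (Or.inl h)), if_neg (fun h => hij (Or.inr h))]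
      simp
  -- row sum bound
  have hSnn : (0:ℝ) ≤ ∑ j, u j ^ 2 * e l j :=
    Finset.sum_nonneg fun j _ => mul_nonneg (sq_nonneg _)
      (by rcases he01 l j with h | h <;> simp [h])
  have hS2 : ∑ j, (1/p * e l j - 1)^2 * (lam * u l * u j)^2 ≤ lam^2 * (mu/(n:ℝ)) * (5/p) := by
    have hterm2 : ∀ j, (1/p * e l j - 1)^2 * (lam * u l * u j)^2
        ≤ lam^2 * u l^2 * ((1/p^2) * (u j^2 * e l j) + u j^2) := by
      intro j
      have h2 : (1/p - 1)^2 ≤ 1/p^2 + 1 := by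
        have h3 : (0:ℝ) < 1/p := by positivity
        have h4 : 1/p * (1/p) = 1/p^2 := by field_simp
        nlinarith
      rcases he01 l j with h0 | h1
      · rw [h0]; nlinarith [sq_nonneg (lam * u l * u j)]
      · rw [h1]
        nlinarith [mul_le_mul_of_nonneg_right h2 (sq_nonneg (lam * u l * u j))]
    have hsplit : ∑ j, lam^2 * u l^2 * ((1/p^2) * (u j^2 * e l j) + u j^2)
        = lam^2 * u l^2 * ((1/p^2) * (∑ j, u j^2 * e l j) + 1) := by
      rw [← Finset.mul_sum, Finset.sum_add_distrib, ← Finset.mul_sum, hsum]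
    have hA : (1/p^2) * (∑ j, u j^2 * e l j) + 1 ≤ 5/p := by
      have h4 : (1/p^2) * (∑ j, u j^2 * e l j) ≤ (1/p^2) * (4*p) :=
        mul_le_mul_of_nonneg_left hS (by positivity)
      have h5 : (1/p^2) * (4*p) = 4/p := by field_simp
      have h6 : (1:ℝ) ≤ 1/p := one_le_one_div hp hp1
      have h7 : (5:ℝ)/p = 4/p + 1/p := by ring
      linarith
    have hin : (0:ℝ) ≤ (1/p^2) * (∑ j, u j ^ 2 * e l j) + 1 := by positivity
    have hul : u l ^ 2 ≤ mu/(n:ℝ) := hmax l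
    calc ∑ j, (1/p * e l j - 1)^2 * (lam * u l * u j)^2
        ≤ ∑ j, lam^2 * u l^2 * ((1/p^2) * (u j^2 * e l j) + u j^2) :=
          Finset.sum_le_sum fun j _ => hterm2 j
      _ = lam^2 * u l^2 * ((1/p^2) * (∑ j, u j^2 * e l j) + 1) := hsplit
      _ ≤ lam^2 * (mu/(n:ℝ)) * (5/p) := by
          have hmul : u l^2 * ((1/p^2) * (∑ j, u j^2 * e l j) + 1) ≤ (mu/(n:ℝ)) * (5/p) :=
            mul_le_mul hul hA hin (by positivity)
          nlinarith [sq_nonneg lam]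
  -- assemble the Frobenius bound
  have hrow1 : ∑ i, ∑ j, (if i = l then (1/p * e i j - 1)^2 * (lam * u i * u j)^2 else 0)
      = ∑ j, (1/p * e l j - 1)^2 * (lam * u l * u j)^2 := by
    have : ∀ i : Fin n, ∑ j, (if i = l then (1/p * e i j - 1)^2 * (lam * u i * u j)^2 else 0)
        = if i = l then ∑ j, (1/p * e i j - 1)^2 * (lam * u i * u j)^2 else 0 := by
      intro i; split <;> simp
    rw [Finset.sum_congr rfl fun i _ => this i, Finset.sum_ite_eq' Finset.univ l]
    simp
  have hrow2 : ∑ i, ∑ j, (if j = l then (1/p * e i j - 1)^2 * (lam * u i * u j)^2 else 0)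
      = ∑ i, (1/p * e i l - 1)^2 * (lam * u i * u l)^2 := by
    refine Finset.sum_congr rfl fun i _ => ?_
    rw [Finset.sum_ite_eq' Finset.univ l]
    simp
  have hsymrow : ∑ i, (1/p * e i l - 1)^2 * (lam * u i * u l)^2
      = ∑ j, (1/p * e l j - 1)^2 * (lam * u l * u j)^2 := by
    refine Finset.sum_congr rfl fun i _ => ?_
    rw [← hesym i l]
    ring
  have hsqrt : Real.sqrt (mu/((n:ℝ)*p)) ^ 2 = mu/((n:ℝ)*p) := Real.sq_sqrt hq
  have hn0 : (0:ℝ) < (n:ℝ) := by exact_mod_cast hn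
  have hdiv : (mu/(n:ℝ)) * (5/p) = 5 * (mu/((n:ℝ)*p)) := by field_simp
  calc ∑ i, ∑ j, ((Matrix.of fun i j =>
        (1 / p) * e i j * (lam * u i * u j)
          - (if i = l ∨ j = l then lam * u i * u j
              else (1 / p) * e i j * (lam * u i * u j))) i j) ^ 2
      ≤ ∑ i, ∑ j, ((if i = l then (1/p * e i j - 1)^2 * (lam * u i * u j)^2 else 0)
          + (if j = l then (1/p * e i j - 1)^2 * (lam * u i * u j)^2 else 0)) :=
        Finset.sum_le_sum fun i _ => Finset.sum_le_sum fun j _ => hterm i j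
    _ = (∑ i, ∑ j, (if i = l then (1/p * e i j - 1)^2 * (lam * u i * u j)^2 else 0))
          + ∑ i, ∑ j, (if j = l then (1/p * e i j - 1)^2 * (lam * u i * u j)^2 else 0) := by
        rw [← Finset.sum_add_distrib]
        exact Finset.sum_congr rfl fun i _ => Finset.sum_add_distrib
    _ = 2 * ∑ j, (1/p * e l j - 1)^2 * (lam * u l * u j)^2 := by
        rw [hrow1, hrow2, hsymrow]; ring
    _ ≤ 2 * (lam^2 * (mu/(n:ℝ)) * (5/p)) := by linarith
    _ ≤ (4 * lam * Real.sqrt (mu/((n:ℝ)*p))) ^ 2 := by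
        have hexp : (4 * lam * Real.sqrt (mu/((n:ℝ)*p))) ^ 2
            = 16 * lam^2 * (mu/((n:ℝ)*p)) := by
          rw [mul_pow, mul_pow, hsqrt]; ring
        rw [hexp]
        nlinarith [sq_nonneg lam, hq]

lemma bad_prob {n : ℕ} {Ω : Type} {mΩ : MeasurableSpace Ω} (P : Measure Ω)
    (hPP : IsProbabilityMeasure P) {p : ℝ} (hp : 0 < p)
    (δ : Ω → Fin n → Fin n → ℝ)
    (hδ01 : ∀ ω i j, δ ω i j = 0 ∨ δ ω i j = 1)
    (hδsym : ∀ ω i j, δ ω j i = δ ω i j)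
    (hδp : ∀ i j : Fin n, P {ω | δ ω i j = 1} = ENNReal.ofReal p)
    (hindep : iIndepFun
        (fun (q : {q : Fin n × Fin n // q.1 ≤ q.2}) (ω : Ω) => δ ω q.1.1 q.1.2) P)
    (w : Fin n → ℝ) (hw0 : ∀ j, 0 ≤ w j) (hw1 : ∑ j, w j = 1)
    {b : ℝ} (hb0 : 0 ≤ b) (hwb : ∀ j, w j ≤ b)
    (r : ℕ) (hrb : (r : ℝ) * b ≤ p) (l : Fin n) :
    P {ω | 4 * p < ∑ j, w j * δ ω l j} ≤ ENNReal.ofReal ((1/3 : ℝ) ^ r) := by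
  classical
  have hfac : (0:ℝ) < (r.factorial : ℝ) := by exact_mod_cast r.factorial_pos
  -- the index map into ordered pairs
  have hle : ∀ j : Fin n, ¬ l ≤ j → j ≤ l := fun j h => le_of_not_ge h
  set qmap : Fin n → {q : Fin n × Fin n // q.1 ≤ q.2} :=
    fun j => if h : l ≤ j then ⟨(l, j), h⟩ else ⟨(j, l), hle j h⟩ with hqmap
  have hfq : ∀ (j : Fin n) (ω : Ω), δ ω l j = δ ω (qmap j).1.1 (qmap j).1.2 := by
    intro j ω
    by_cases h : l ≤ j
    · simp [hqmap, h]
    · simp [hqmap, h]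
      exact hδsym ω j l
  have hgq : ∀ j, (if ((qmap j).1.1 = l) then (qmap j).1.2 else (qmap j).1.1) = j := by
    intro j
    by_cases h : l ≤ j
    · simp [hqmap, h]
    · have hjl : j ≠ l := by rintro rfl; exact h le_rfl
      simp [hqmap, h, hjl]
  have hq_inj : Function.Injective qmap := by
    intro a c hac
    rw [← hgq a, ← hgq c, hac]
  -- probability of intersections
  have hPT : ∀ T : Finset (Fin n),
      P (⋂ j ∈ T, {ω | δ ω l j = 1}) = ENNReal.ofReal p ^ T.card := by
    intro T
    have key := hindep.measure_inter_preimage_eq_mul (T.image qmap)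
      (sets := fun _ => ({1} : Set ℝ)) (fun q _ => measurableSet_singleton 1)
    have hset : (⋂ q ∈ T.image qmap, (fun ω => δ ω q.1.1 q.1.2) ⁻¹' ({1} : Set ℝ))
        = ⋂ j ∈ T, {ω | δ ω l j = 1} := by
      ext ω
      simp only [Set.mem_iInter, Set.mem_preimage, Set.mem_singleton_iff, Finset.mem_image,
        Set.mem_setOf_eq]
      constructor
      · intro h j hj
        rw [hfq j ω]
        exact h (qmap j) ⟨j, hj, rfl⟩
      · rintro h q ⟨j, hj, rfl⟩
        rw [← hfq j ω]
        exact h j hj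
    have hprod : ∏ q ∈ T.image qmap, P ((fun ω => δ ω q.1.1 q.1.2) ⁻¹' ({1} : Set ℝ))
        = ENNReal.ofReal p ^ T.card := by
      rw [Finset.prod_image (fun x _ y _ h => hq_inj h)]
      have : ∀ j ∈ T, P ((fun ω => δ ω (qmap j).1.1 (qmap j).1.2) ⁻¹' ({1} : Set ℝ))
          = ENNReal.ofReal p := by
        intro j _
        have hpre : ((fun ω => δ ω (qmap j).1.1 (qmap j).1.2) ⁻¹' ({1} : Set ℝ))
            = {ω | δ ω l j = 1} := by
          ext ω
          simp [Set.mem_preimage, ← hfq j ω]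
        rw [hpre, hδp l j]
      rw [Finset.prod_congr rfl this, Finset.prod_const]
    rw [hset] at key
    rw [key, hprod]
  set A := Finset.powersetCard r (Finset.univ : Finset (Fin n)) with hA
  set Er : Finset (Fin n) → Set Ω := fun T => ⋂ j ∈ T, {ω | δ ω l j = 1} with hEr
  set G : Ω → ℝ≥0∞ := fun ω => ∑ T ∈ A,
      (toMeasurable P (Er T)).indicator (fun _ => ENNReal.ofReal (∏ j ∈ T, w j)) ω with hG
  have hGmeas : Measurable G := by
    apply Finset.measurable_sum
    intro T _
    exact measurable_const.indicator (measurableSet_toMeasurable P (Er T))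
  have hGint : ∫⁻ ω, G ω ∂P ≤ ENNReal.ofReal (p ^ r * (1 / (r.factorial : ℝ))) := by
    have h1 : ∫⁻ ω, G ω ∂P
        = ∑ T ∈ A, ENNReal.ofReal (∏ j ∈ T, w j) * P (toMeasurable P (Er T)) := by
      rw [hG, lintegral_finset_sum _
        (fun T _ => measurable_const.indicator (measurableSet_toMeasurable P (Er T)))]
      refine Finset.sum_congr rfl fun T _ => ?_
      rw [lintegral_indicator (measurableSet_toMeasurable P (Er T)), setLIntegral_const]
    have h2 : ∀ T ∈ A, ENNReal.ofReal (∏ j ∈ T, w j) * P (toMeasurable P (Er T))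
        = ENNReal.ofReal ((∏ j ∈ T, w j) * p ^ r) := by
      intro T hT
      rw [measure_toMeasurable, hEr, hPT T, Finset.mem_powersetCard_univ.mp (hA ▸ hT),
        ← ENNReal.ofReal_pow hp.le,
        ← ENNReal.ofReal_mul (Finset.prod_nonneg fun j _ => hw0 j)]
    rw [h1, Finset.sum_congr rfl h2,
      ← ENNReal.ofReal_sum_of_nonneg
        (fun T _ => mul_nonneg (Finset.prod_nonneg fun j _ => hw0 j) (by positivity))]
    apply ENNReal.ofReal_le_ofReal
    rw [← Finset.sum_mul]
    have hup := esymm_upper r w hw0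
    rw [hw1, one_pow] at hup
    have hE : ∑ T ∈ A, ∏ j ∈ T, w j ≤ 1 / (r.factorial : ℝ) := by
      rw [le_div_iff₀ hfac]; linarith
    calc (∑ T ∈ A, ∏ j ∈ T, w j) * p ^ r ≤ (1 / (r.factorial : ℝ)) * p ^ r :=
          mul_le_mul_of_nonneg_right hE (by positivity)
      _ = p ^ r * (1 / (r.factorial : ℝ)) := by ring
  have hsub : {ω | 4 * p < ∑ j, w j * δ ω l j}
      ⊆ {ω | ENNReal.ofReal ((3*p) ^ r / (r.factorial : ℝ)) ≤ G ω} := by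
    intro ω hω
    simp only [Set.mem_setOf_eq] at hω ⊢
    set v : Fin n → ℝ := fun j => w j * δ ω l j with hv
    have hv0 : ∀ j, 0 ≤ v j := fun j => mul_nonneg (hw0 j)
      (by rcases hδ01 ω l j with h | h <;> simp [h])
    have hvb : ∀ j, v j ≤ b := by
      intro j
      rcases hδ01 ω l j with h | h
      · simp only [hv, h, mul_zero]; exact hb0
      · simp only [hv, h, mul_one]; exact le_trans (hwb j) le_rfl
    have hp4 : p ≤ ∑ j, v j := by
      have : p ≤ 4 * p := by linarith
      exact le_trans this (le_of_lt hω)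
    have hsv : (r : ℝ) * b ≤ ∑ j, v j := le_trans hrb hp4
    have hlow := esymm_lower r v b hb0 hv0 hvb hsv
    have h3p : (3*p) ^ r ≤ ((∑ j, v j) - (r : ℝ) * b) ^ r :=
      pow_le_pow_left₀ (by positivity) (by linarith) r
    have hGge : ENNReal.ofReal (∑ T ∈ A, ∏ j ∈ T, v j) ≤ G ω := by
      rw [ENNReal.ofReal_sum_of_nonneg (fun T _ => Finset.prod_nonneg fun j _ => hv0 j), hG]
      refine Finset.sum_le_sum fun T _ => ?_
      by_cases hall : ∀ j ∈ T, δ ω l j = 1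
      · have hvw : ∏ j ∈ T, v j = ∏ j ∈ T, w j :=
          Finset.prod_congr rfl fun j hj => by simp only [hv, hall j hj, mul_one]
        have hmem : ω ∈ toMeasurable P (Er T) := by
          apply subset_toMeasurable
          rw [hEr]
          exact Set.mem_iInter₂.mpr fun j hj => hall j hj
        rw [hvw, Set.indicator_of_mem hmem]
      · push_neg at hall
        obtain ⟨j₀, hj₀, hne⟩ := hall
        have hz : v j₀ = 0 := by
          rcases hδ01 ω l j₀ with h | h
          · simp [hv, h]
          · exact absurd h hne
        rw [Finset.prod_eq_zero hj₀ hz]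
        simp
    refine le_trans ?_ hGge
    apply ENNReal.ofReal_le_ofReal
    rw [div_le_iff₀ hfac]
    nlinarith
  have hc0 : ENNReal.ofReal ((3*p) ^ r / (r.factorial : ℝ)) ≠ 0 :=
    (ENNReal.ofReal_pos.mpr (by positivity)).ne'
  have hmark := meas_ge_le_lintegral_div (μ := P) hGmeas.aemeasurable hc0 ENNReal.ofReal_ne_top
  calc P {ω | 4 * p < ∑ j, w j * δ ω l j}
      ≤ P {ω | ENNReal.ofReal ((3*p) ^ r / (r.factorial : ℝ)) ≤ G ω} := measure_mono hsub
    _ ≤ (∫⁻ ω, G ω ∂P) / ENNReal.ofReal ((3*p) ^ r / (r.factorial : ℝ)) := hmark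
    _ ≤ ENNReal.ofReal (p ^ r * (1 / (r.factorial : ℝ)))
          / ENNReal.ofReal ((3*p) ^ r / (r.factorial : ℝ)) := ENNReal.div_le_div_right hGint _
    _ = ENNReal.ofReal ((p ^ r * (1 / (r.factorial : ℝ))) / ((3*p) ^ r / (r.factorial : ℝ))) :=
          (ENNReal.ofReal_div_of_pos (by positivity)).symm
    _ = ENNReal.ofReal ((1/3 : ℝ) ^ r) := by
          congr 1
          rw [mul_pow, div_pow, one_pow]
          field_simp

/-- Lemma 9 of the paper: spectral closeness of the fully sampled matrix and its
leave-one-out version. -/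
theorem leave_one_out_matrix_concentration :
    ∃ C₁ C₂ : ℝ, 0 < C₁ ∧ 0 < C₂ ∧
    ∀ (n : ℕ), 2 ≤ n →
    ∀ (p lam mu : ℝ), 0 < p → p ≤ 1 → 0 < lam →
    ∀ (ustar : Fin n → ℝ), l2 ustar = 1 → linf ustar = Real.sqrt (mu / n) →
    ∀ (Ω : Type) (_ : MeasurableSpace Ω) (P : Measure Ω), IsProbabilityMeasure P →
    ∀ (δ : Ω → Fin n → Fin n → ℝ),
      -- Bernoulli sampling, symmetric
      (∀ ω i j, δ ω i j = 0 ∨ δ ω i j = 1) →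
      (∀ ω i j, δ ω j i = δ ω i j) →
      (∀ i j : Fin n, P {ω | δ ω i j = 1} = ENNReal.ofReal p) →
      iIndepFun
        (fun (q : {q : Fin n × Fin n // q.1 ≤ q.2}) (ω : Ω) => δ ω q.1.1 q.1.2) P →
    (n : ℝ) ^ 2 * p ≥ C₁ * mu * n * Real.log n →
    P {ω | ∀ l : Fin n,
          specNorm (Matrix.of fun i j =>
              (1 / p) * δ ω i j * (lam * ustar i * ustar j)
                - (if i = l ∨ j = l then lam * ustar i * ustar j
                    else (1 / p) * δ ω i j * (lam * ustar i * ustar j)))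
            ≤ C₂ * lam * Real.sqrt (mu / (n * p))}
      ≥ ENNReal.ofReal (1 - 1 / (n : ℝ) ^ 10) := by
  refine ⟨100, 4, by norm_num, by norm_num, ?_⟩
  intro n hn2 p lam mu hp hp1 hlam ustar hl2u hlinf Ω mΩ P hPP δ hδ01 hδsym hδp hindep hC1
  have hn0 : (0:ℝ) < n := by
    have : (0:ℕ) < n := by omega
    exact_mod_cast this
  have hn1 : (1:ℝ) < n := by
    have : (2:ℝ) ≤ n := by exact_mod_cast hn2
    linarith
  have hlog : 0 < Real.log n := Real.log_pos hn1
  have hw0 : ∀ j, 0 ≤ ustar j ^ 2 := fun j => sq_nonneg _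
  have hsum : ∑ j, ustar j ^ 2 = 1 := by
    have h0 : 0 ≤ ∑ j, ustar j ^ 2 := Finset.sum_nonneg fun j _ => sq_nonneg _
    have h1 : Real.sqrt (∑ j, ustar j ^ 2) = 1 := hl2u
    calc ∑ j, ustar j ^ 2 = Real.sqrt (∑ j, ustar j ^ 2) ^ 2 := (Real.sq_sqrt h0).symm
      _ = 1 := by rw [h1]; norm_num
  have habs : ∀ j, |ustar j| ≤ Real.sqrt (mu / n) := by
    intro j
    rw [← hlinf]
    exact le_ciSup (Finite.bddAbove_range fun i => |ustar i|) j
  have hqn : 0 < mu / (n:ℝ) := by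
    by_contra hq
    push_neg at hq
    have hz : Real.sqrt (mu / (n:ℝ)) = 0 := Real.sqrt_eq_zero'.mpr hq
    have : ∀ j, ustar j ^ 2 = 0 := by
      intro j
      have := habs j
      rw [hz] at this
      have : ustar j = 0 := abs_nonpos_iff.mp this
      simp [this]
    rw [Finset.sum_congr rfl fun j _ => this j] at hsum
    simp at hsum
  have hmu : 0 < mu := by
    have hfe : mu = (mu / (n:ℝ)) * (n:ℝ) := by field_simp
    nlinarith
  have hmax : ∀ j, ustar j ^ 2 ≤ mu / n := by
    intro j
    calc ustar j ^ 2 = |ustar j| ^ 2 := (sq_abs _).symm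
      _ ≤ Real.sqrt (mu / n) ^ 2 := pow_le_pow_left₀ (abs_nonneg _) (habs j) 2
      _ = mu / n := Real.sq_sqrt hqn.le
  have hnp : 100 * (mu * Real.log n) ≤ (n:ℝ) * p := by
    have key : (n:ℝ) * (100 * (mu * Real.log n)) ≤ (n:ℝ) * ((n:ℝ) * p) := by nlinarith
    exact le_of_mul_le_mul_left key hn0
  set r := ⌈(11:ℝ) * Real.log n⌉₊ with hr
  have hrlow : (11:ℝ) * Real.log n ≤ r := Nat.le_ceil _
  have hrup : (r:ℝ) ≤ 13 * Real.log n := by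
    have h1 : (r:ℝ) < 11 * Real.log n + 1 := Nat.ceil_lt_add_one (by positivity)
    have h2 : Real.log 2 ≤ Real.log n := Real.log_le_log (by norm_num) (by exact_mod_cast hn2)
    have h3 : (1:ℝ) ≤ 2 * Real.log n := by nlinarith [Real.log_two_gt_d9]
    linarith
  have hb0 : (0:ℝ) ≤ mu / (n:ℝ) := hqn.le
  have hrb : (r:ℝ) * (mu / (n:ℝ)) ≤ p := by
    have h1 : (r:ℝ) * (mu / (n:ℝ)) ≤ 13 * Real.log n * (mu / (n:ℝ)) :=
      mul_le_mul_of_nonneg_right hrup hb0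
    have h2 : 13 * Real.log n * (mu / (n:ℝ)) ≤ p := by
      rw [show 13 * Real.log n * (mu / (n:ℝ)) = (13 * (mu * Real.log n)) / (n:ℝ) by ring,
        div_le_iff₀ hn0]
      nlinarith [mul_nonneg hmu.le hlog.le]
    linarith
  have hbadl : ∀ l : Fin n, P {ω | 4 * p < ∑ j, ustar j ^ 2 * δ ω l j}
      ≤ ENNReal.ofReal ((1/3 : ℝ) ^ r) := fun l =>
    bad_prob P hPP hp δ hδ01 hδsym hδp hindep (fun j => ustar j ^ 2) hw0 hsum hb0 hmax r hrb l
  have h3r : (n:ℝ) ^ (11:ℕ) ≤ 3 ^ r := by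
    have e1 : (n:ℝ) ^ (11:ℕ) = Real.exp ((11:ℕ) * Real.log n) := by
      rw [Real.exp_nat_mul, Real.exp_log hn0]
    have e2 : Real.exp ((11:ℕ) * Real.log n) ≤ Real.exp r := by
      apply Real.exp_le_exp.mpr
      push_cast
      exact hrlow
    have e3 : Real.exp (r:ℝ) = Real.exp 1 ^ r := by
      rw [← Real.exp_nat_mul, mul_one]
    have e4 : Real.exp 1 ^ r ≤ 3 ^ r := by
      apply pow_le_pow_left₀ (Real.exp_pos 1).le
      have := Real.exp_one_lt_d9
      linarith
    calc (n:ℝ) ^ (11:ℕ) = Real.exp ((11:ℕ) * Real.log n) := e1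
      _ ≤ Real.exp r := e2
      _ = Real.exp 1 ^ r := e3
      _ ≤ 3 ^ r := e4
  have hpow : ((1:ℝ)/3) ^ r ≤ 1 / (n:ℝ) ^ (11:ℕ) := by
    rw [div_pow, one_pow]
    exact one_div_le_one_div_of_le (by positivity) h3r
  set Bad := ⋃ l : Fin n, {ω | 4 * p < ∑ j, ustar j ^ 2 * δ ω l j} with hBad
  have hPBad : P Bad ≤ ENNReal.ofReal (1 / (n:ℝ) ^ (10:ℕ)) := by
    calc P Bad ≤ ∑' l : Fin n, P {ω | 4 * p < ∑ j, ustar j ^ 2 * δ ω l j} :=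
          measure_iUnion_le _
      _ = ∑ l : Fin n, P {ω | 4 * p < ∑ j, ustar j ^ 2 * δ ω l j} := tsum_fintype _
      _ ≤ ∑ _l : Fin n, ENNReal.ofReal ((1/3 : ℝ) ^ r) :=
          Finset.sum_le_sum fun l _ => hbadl l
      _ = (n : ℝ≥0∞) * ENNReal.ofReal ((1/3 : ℝ) ^ r) := by
          rw [Finset.sum_const, Finset.card_univ, Fintype.card_fin, nsmul_eq_mul]
      _ = ENNReal.ofReal ((n:ℝ) * (1/3 : ℝ) ^ r) := by
          rw [← ENNReal.ofReal_natCast n, ← ENNReal.ofReal_mul (by positivity)]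
      _ ≤ ENNReal.ofReal (1 / (n:ℝ) ^ (10:ℕ)) := by
          apply ENNReal.ofReal_le_ofReal
          have hmul : (n:ℝ) * (1/3 : ℝ) ^ r ≤ (n:ℝ) * (1 / (n:ℝ) ^ (11:ℕ)) :=
            mul_le_mul_of_nonneg_left hpow hn0.le
          have hid : (n:ℝ) * (1 / (n:ℝ) ^ (11:ℕ)) = 1 / (n:ℝ) ^ (10:ℕ) := by
            field_simp
          linarith
  have hcover : ∀ ω, ω ∉ Bad → ∀ l : Fin n,
      specNorm (Matrix.of fun i j =>
          (1 / p) * δ ω i j * (lam * ustar i * ustar j)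
            - (if i = l ∨ j = l then lam * ustar i * ustar j
                else (1 / p) * δ ω i j * (lam * ustar i * ustar j)))
        ≤ 4 * lam * Real.sqrt (mu / (n * p)) := by
    intro ω hω l
    have hSl : ∑ j, ustar j ^ 2 * δ ω l j ≤ 4 * p := by
      by_contra hlt
      push_neg at hlt
      exact hω (Set.mem_iUnion.mpr ⟨l, hlt⟩)
    exact det_bound p lam mu hp hp1 hlam (by omega) hmu ustar hsum hmax (δ ω)
      (hδ01 ω) (hδsym ω) l hSl
  have h1le : (1 : ℝ≥0∞) ≤ P {ω | ∀ l : Fin n,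
      specNorm (Matrix.of fun i j =>
          (1 / p) * δ ω i j * (lam * ustar i * ustar j)
            - (if i = l ∨ j = l then lam * ustar i * ustar j
                else (1 / p) * δ ω i j * (lam * ustar i * ustar j)))
        ≤ 4 * lam * Real.sqrt (mu / (n * p))} + P Bad := by
    have hsub : (Set.univ : Set Ω) ⊆ {ω | ∀ l : Fin n,
        specNorm (Matrix.of fun i j =>
            (1 / p) * δ ω i j * (lam * ustar i * ustar j)
              - (if i = l ∨ j = l then lam * ustar i * ustar j
                  else (1 / p) * δ ω i j * (lam * ustar i * ustar j)))
          ≤ 4 * lam * Real.sqrt (mu / (n * p))} ∪ Bad := by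
      intro ω _
      by_cases h : ω ∈ Bad
      · exact Or.inr h
      · exact Or.inl (hcover ω h)
    calc (1:ℝ≥0∞) = P Set.univ := measure_univ.symm
      _ ≤ P (_ ∪ Bad) := measure_mono hsub
      _ ≤ _ + P Bad := measure_union_le _ _
  have hgoal : ENNReal.ofReal (1 - 1 / (n : ℝ) ^ 10)
      ≤ P {ω | ∀ l : Fin n,
      specNorm (Matrix.of fun i j =>
          (1 / p) * δ ω i j * (lam * ustar i * ustar j)
            - (if i = l ∨ j = l then lam * ustar i * ustar j
                else (1 / p) * δ ω i j * (lam * ustar i * ustar j)))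
        ≤ 4 * lam * Real.sqrt (mu / (n * p))} := by
    calc ENNReal.ofReal (1 - 1 / (n : ℝ) ^ 10)
        = 1 - ENNReal.ofReal (1 / (n:ℝ) ^ (10:ℕ)) := by
          rw [ENNReal.ofReal_sub _ (by positivity), ENNReal.ofReal_one]
      _ ≤ 1 - P Bad := tsub_le_tsub_left hPBad 1
      _ ≤ _ := tsub_le_iff_right.mpr h1le
  exact hgoal
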